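/- Let k ≥ 3 and let G be a complete k-edge-colored graph. If G is primitive (its only modules are the trivial ones), then G contains a rainbow triangle. -/
import Mathlib

namespace Stmt5Aux

variable {V : Type*}

/-- Nontrivial module of the substructure induced on `s`. -/
def NTM (c : V → V → ℕ) (s M : Finset V) : Prop :=
  M ⊆ s ∧ 2 ≤ M.card ∧ M ≠ s ∧
    ∀ u ∈ M, ∀ w ∈ M, ∀ y ∈ s, y ∉ M → c u y = c w y

/-- All colors within `s` lie in `{a,b}`. -/
def Bnd (c : V → V → ℕ) (s : Finset V) (a b : ℕ) : Prop :=
  ∀ u ∈ s, ∀ w ∈ s, u ≠ w → c u w = a ∨ c u w = b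

/-- Rainbow-free: every triangle has two equal colors. -/
def RF (c : V → V → ℕ) : Prop :=
  ∀ u v w : V, u ≠ v → u ≠ w → v ≠ w →
    c u v = c u w ∨ c u v = c v w ∨ c u w = c v w


/-- Monochromatic component lemma: the `h`-colored component of an edge of
color `h` inside `s` is a module of `s`; moreover every one of its members
is incident to an `h`-edge, and it is contained in any `h`-closed set `P`. -/
theorem comp (c : V → V → ℕ) (hs : ∀ u v, c u v = c v u) (hrf : RF c)
    (s : Finset V) (h : ℕ) (y₁ y₂ : V) (hy1 : y₁ ∈ s) (hy2 : y₂ ∈ s)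
    (hne : y₁ ≠ y₂) (hcol : c y₁ y₂ = h) :
    ∃ C : Finset V, C ⊆ s ∧ y₁ ∈ C ∧ y₂ ∈ C ∧
      (∀ u ∈ C, ∀ w ∈ C, ∀ y ∈ s, y ∉ C → c u y = c w y) ∧
      (∀ x ∈ C, ∃ w ∈ s, w ≠ x ∧ c x w = h) ∧
      (∀ P : Finset V, y₁ ∈ P → (∀ y ∈ P, ∀ z ∈ s, z ∉ P → c y z ≠ h) →
        C ⊆ P) := by
  classical
  set E : V → V → Prop := fun a b => a ∈ s ∧ b ∈ s ∧ a ≠ b ∧ c a b = h with hE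
  set R : V → V → Prop := Relation.ReflTransGen E with hR
  have hmem : ∀ x, R y₁ x → x ∈ s := by
    intro x hx
    induction hx with
    | refl => exact hy1
    | tail _ hbc _ => exact hbc.2.1
  refine ⟨s.filter (fun x => R y₁ x), Finset.filter_subset _ _, ?_, ?_, ?_, ?_, ?_⟩
  · exact Finset.mem_filter.mpr ⟨hy1, Relation.ReflTransGen.refl⟩
  · exact Finset.mem_filter.mpr ⟨hy2, Relation.ReflTransGen.single ⟨hy1, hy2, hne, hcol⟩⟩
  · -- module property
    have key : ∀ y, y ∈ s → ¬ R y₁ y → ∀ x, R y₁ x → c y x = c y y₁ := by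
      intro y hys hyR x hx
      induction hx with
      | refl => rfl
      | @tail b x' hb hbx ih =>
        -- hb : R y₁ b, hbx : E b x'
        have hRb : R y₁ b := hb
        have hRx' : R y₁ x' := hRb.tail hbx
        have hyb : y ≠ b := by rintro rfl; exact hyR hRb
        have hyx' : y ≠ x' := by rintro rfl; exact hyR hRx'
        have hcyb : c y b ≠ h := by
          intro hcyb
          exact hyR (hRb.tail ⟨hbx.1, hys, fun hh => hyb hh.symm, by rw [hs b y]; exact hcyb⟩)
        have hcyx' : c y x' ≠ h := by
          intro hcyx'
          exact hyR (hRx'.tail ⟨hbx.2.1, hys, fun hh => hyx' hh.symm, by rw [hs x' y]; exact hcyx'⟩)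
        have := hrf y b x' hyb hyx' hbx.2.2.1
        rcases this with h1 | h1 | h1
        · rw [← h1, ih]
        · exact absurd (h1.trans hbx.2.2.2) hcyb
        · exact absurd (h1.trans hbx.2.2.2) hcyx'
    intro u hu w hw y hys hyn
    rw [Finset.mem_filter] at hu hw
    have hyR : ¬ R y₁ y := fun hh => hyn (Finset.mem_filter.mpr ⟨hys, hh⟩)
    have e1 := key y hys hyR u hu.2
    have e2 := key y hys hyR w hw.2
    rw [hs u y, hs w y, e1, e2]
  · -- each member has an h-edge
    intro x hx
    rw [Finset.mem_filter] at hx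
    rcases Relation.ReflTransGen.cases_tail hx.2 with rfl | ⟨b, hb, hbx⟩
    · exact ⟨y₂, hy2, hne.symm, hcol⟩
    · exact ⟨b, hbx.1, hbx.2.2.1, by rw [hs x b]; exact hbx.2.2.2⟩
  · -- contained in closed sets
    intro P hy1P hcr x hx
    rw [Finset.mem_filter] at hx
    have : ∀ z, R y₁ z → z ∈ P := by
      intro z hz
      induction hz with
      | refl => exact hy1P
      | @tail b x' hb hbx ih =>
        by_contra hx'P
        exact hcr b ih x' hbx.2.1 hx'P hbx.2.2.2
    exact this x hx.2


/-- Confinement corollary: an `h`-edge inside a closed proper `P ⊆ s` yields a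
nontrivial module of `s`. -/
theorem conf (c : V → V → ℕ) (hs : ∀ u v, c u v = c v u) (hrf : RF c)
    (s : Finset V) (h : ℕ) (u w : V) (P : Finset V) (hPs : P ⊆ s)
    (hcr : ∀ y ∈ P, ∀ z ∈ s, z ∉ P → c y z ≠ h)
    (huP : u ∈ P) (hws : w ∈ s) (hne : u ≠ w) (hcol : c u w = h)
    (z₀ : V) (hz₀s : z₀ ∈ s) (hz₀ : z₀ ∉ P) :
    ∃ M, NTM c s M := by
  obtain ⟨C, hCs, hu, hw2, hmod, _, hclosed⟩ :=
    comp c hs hrf s h u w (hPs huP) hws hne hcol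
  have hCP : C ⊆ P := hclosed P huP hcr
  refine ⟨C, hCs, ?_, ?_, hmod⟩
  · exact Finset.one_lt_card.mpr ⟨u, hu, w, hw2, hne⟩
  · intro hCeq
    exact hz₀ (hCP (hCeq ▸ hz₀s))

/-- Avoidance corollary: an `h`-edge in `s` plus a vertex of `s` with no
incident `h`-edge yields a nontrivial module of `s`. -/
theorem comp_avoid (c : V → V → ℕ) (hs : ∀ u v, c u v = c v u) (hrf : RF c)
    (s : Finset V) (h : ℕ) (u w : V) (hus : u ∈ s) (hws : w ∈ s)
    (hne : u ≠ w) (hcol : c u w = h)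
    (z₀ : V) (hz₀s : z₀ ∈ s) (hz₀ : ∀ x ∈ s, x ≠ z₀ → c z₀ x ≠ h) :
    ∃ M, NTM c s M := by
  obtain ⟨C, hCs, hu, hw2, hmod, hedge, _⟩ :=
    comp c hs hrf s h u w hus hws hne hcol
  refine ⟨C, hCs, ?_, ?_, hmod⟩
  · exact Finset.one_lt_card.mpr ⟨u, hu, w, hw2, hne⟩
  · intro hCeq
    obtain ⟨x, hxs, hxz, hcx⟩ := hedge z₀ (hCeq ▸ hz₀s)
    exact hz₀ x hxs hxz hcx

/-- Gallai-partition statement for the substructure on `s`. -/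
def GP (c : V → V → ℕ) (s : Finset V) : Prop :=
  ∃ (a b : ℕ) (part : V → Finset V),
    (∀ x ∈ s, x ∈ part x ∧ part x ⊆ s ∧ part x ≠ s ∧
       ∀ u ∈ part x, ∀ w ∈ part x, ∀ y ∈ s, y ∉ part x → c u y = c w y) ∧
    (∀ x ∈ s, ∀ y ∈ s, y ∉ part x → c x y = a ∨ c x y = b) ∧
    (∀ x ∈ s, ∀ y ∈ s, y ∈ part x → part y = part x)

/-- Gallai partition from the main statement for smaller sets. -/
theorem gp_of (c : V → V → ℕ) (hs : ∀ u v, c u v = c v u) (hrf : RF c) (m : ℕ)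
    (hS : ∀ s : Finset V, s.card ≤ m → (∃ M, NTM c s M) ∨ ∃ a b, Bnd c s a b) :
    ∀ k : ℕ, ∀ s : Finset V, s.card ≤ k → s.card ≤ m → 2 ≤ s.card → GP c s := by
  classical
  intro k
  induction k with
  | zero => intro s h1 _ h3; omega
  | succ k ih =>
    intro s hk hm h2
    by_cases Hb : ∃ a b, Bnd c s a b
    · obtain ⟨a, b, hbnd⟩ := Hb
      refine ⟨a, b, fun x => {x}, ?_, ?_, ?_⟩
      · intro x hx
        refine ⟨Finset.mem_singleton_self x, Finset.singleton_subset_iff.mpr hx, ?_, ?_⟩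
        · intro hcontra
          rw [← hcontra] at h2; simp at h2
        · intro u hu w hw y _ _
          rw [Finset.mem_singleton] at hu hw
          rw [hu, hw]
      · intro x hx y hy hxy
        rw [Finset.mem_singleton] at hxy
        exact hbnd x hx y hy (fun hh => hxy hh.symm)
      · intro x _ y _ hy
        rw [Finset.mem_singleton] at hy
        rw [hy]
    · rcases hS s hm with ⟨M, hMs, hMcard, hMne, hMmod⟩ | hb
      swap
      · exact absurd hb Hb
      have hMsne : M.Nonempty := Finset.card_pos.mp (by omega)
      obtain ⟨m₀, hm₀⟩ := hMsne
      have houtne : (s \ M).Nonempty := by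
        rcases Finset.exists_of_ssubset (Finset.ssubset_iff_subset_ne.mpr ⟨hMs, hMne⟩) with
          ⟨z, hz1, hz2⟩
        exact ⟨z, Finset.mem_sdiff.mpr ⟨hz1, hz2⟩⟩
      set t : Finset V := insert m₀ (s \ M) with ht
      have hm₀t : m₀ ∉ s \ M := by simp [hm₀]
      have htcard : t.card = (s \ M).card + 1 := Finset.card_insert_of_notMem hm₀t
      have hsd : (s \ M).card = s.card - M.card := Finset.card_sdiff_of_subset hMs
      have hMcards : M.card ≤ s.card := Finset.card_le_card hMs
      have htk : t.card ≤ k := by omega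
      have htm : t.card ≤ m := by omega
      have ht2 : 2 ≤ t.card := by
        have := Finset.card_pos.mpr houtne
        omega
      have hts : t ⊆ s := by
        intro z hz
        rcases Finset.mem_insert.mp hz with rfl | hz'
        · exact hMs hm₀
        · exact (Finset.mem_sdiff.mp hz').1
      obtain ⟨a, b, partf, hparts, hcross, hcoh⟩ := ih t htk htm ht2
      have hm₀tmem : m₀ ∈ t := Finset.mem_insert_self _ _
      -- facts about t-membership
      have htmem : ∀ z, z ∈ t ↔ (z = m₀ ∨ (z ∈ s ∧ z ∉ M)) := by
        intro z
        simp [ht, Finset.mem_insert, Finset.mem_sdiff]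
      -- the lifted partition
      set part : V → Finset V := fun x =>
        if m₀ ∈ partf (if x ∈ M then m₀ else x)
        then (partf (if x ∈ M then m₀ else x) \ {m₀}) ∪ M
        else partf (if x ∈ M then m₀ else x) with hpart
      have hπ : ∀ x ∈ s, (if x ∈ M then m₀ else x) ∈ t := by
        intro x hx
        by_cases hxM : x ∈ M
        · simp [hxM, hm₀tmem]
        · simp only [if_neg hxM]
          exact (htmem x).mpr (Or.inr ⟨hx, hxM⟩)
      refine ⟨a, b, part, ?_, ?_, ?_⟩
      · -- part properties
        intro x hx
        obtain ⟨hmemR, hRt, hRne, hRmod⟩ := hparts _ (hπ x hx)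
        set R := partf (if x ∈ M then m₀ else x) with hRdef
        constructor
        · -- x ∈ part x
          by_cases hc : m₀ ∈ R
          · simp only [hpart, ← hRdef, if_pos hc]
            by_cases hxM : x ∈ M
            · exact Finset.mem_union_right _ hxM
            · refine Finset.mem_union_left _ (Finset.mem_sdiff.mpr ⟨?_, ?_⟩)
              · rw [if_neg hxM] at hmemR; exact hmemR
              · simp only [Finset.mem_singleton]
                rintro rfl; exact hxM hm₀
          · simp only [hpart, ← hRdef, if_neg hc]
            by_cases hxM : x ∈ M
            · rw [if_pos hxM] at hmemR; exact absurd hmemR hc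
            · rw [if_neg hxM] at hmemR; exact hmemR
        constructor
        · -- part x ⊆ s
          by_cases hc : m₀ ∈ R
          · simp only [hpart, ← hRdef, if_pos hc]
            intro z hz
            rcases Finset.mem_union.mp hz with hz1 | hz2
            · exact hts (hRt (Finset.mem_sdiff.mp hz1).1)
            · exact hMs hz2
          · simp only [hpart, ← hRdef, if_neg hc]
            exact fun z hz => hts (hRt hz)
        constructor
        · -- part x ≠ s
          by_cases hc : m₀ ∈ R
          · obtain ⟨γ, hγt, hγR⟩ := Finset.exists_of_ssubset
              (Finset.ssubset_iff_subset_ne.mpr ⟨hRt, hRne⟩)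
            have hγm₀ : γ ≠ m₀ := by rintro rfl; exact hγR hc
            have hγs : γ ∈ s ∧ γ ∉ M := by
              rcases (htmem γ).mp hγt with rfl | hγ'
              · exact absurd rfl hγm₀
              · exact hγ'
            intro hcontra
            have : γ ∈ part x := by rw [hcontra]; exact hγs.1
            simp only [hpart, ← hRdef, if_pos hc, Finset.mem_union, Finset.mem_sdiff] at this
            rcases this with ⟨h1, _⟩ | h2
            · exact hγR h1
            · exact hγs.2 h2
          · intro hcontra
            have : m₀ ∈ part x := by rw [hcontra]; exact hMs hm₀
            simp only [hpart, ← hRdef, if_neg hc] at this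
            exact hc this
        · -- module property
          intro u hu w hw y hys hyn
          by_cases hc : m₀ ∈ R
          · simp only [hpart, ← hRdef, if_pos hc] at hu hw hyn
            have hyM : y ∉ M := fun hh => hyn (Finset.mem_union_right _ hh)
            have hym₀ : y ≠ m₀ := by rintro rfl; exact hyM hm₀
            have hyR : y ∉ R := by
              intro hh
              exact hyn (Finset.mem_union_left _ (Finset.mem_sdiff.mpr
                ⟨hh, by simpa using hym₀⟩))
            have hyt : y ∈ t := (htmem y).mpr (Or.inr ⟨hys, hyM⟩)
            have key : ∀ z, z ∈ (R \ {m₀}) ∪ M → c z y = c m₀ y := by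
              intro z hz
              rcases Finset.mem_union.mp hz with hz1 | hz2
              · exact hRmod z (Finset.mem_sdiff.mp hz1).1 m₀ hc y hyt hyR
              · exact hMmod z hz2 m₀ hm₀ y hys hyM
            rw [key u hu, key w hw]
          · simp only [hpart, ← hRdef, if_neg hc] at hu hw hyn
            have hum₀ : u ≠ m₀ := by rintro rfl; exact hc hu
            have hwm₀ : w ≠ m₀ := by rintro rfl; exact hc hw
            have huM : u ∉ M := by
              intro hh
              rcases (htmem u).mp (hRt hu) with rfl | hu'
              · exact hum₀ rfl
              · exact hu'.2 hh
            have hwM : w ∉ M := by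
              intro hh
              rcases (htmem w).mp (hRt hw) with rfl | hw'
              · exact hwm₀ rfl
              · exact hw'.2 hh
            by_cases hyM : y ∈ M
            · have e1 : c y u = c m₀ u := hMmod y hyM m₀ hm₀ u (hts (hRt hu)) huM
              have e2 : c y w = c m₀ w := hMmod y hyM m₀ hm₀ w (hts (hRt hw)) hwM
              have e3 : c u m₀ = c w m₀ := hRmod u hu w hw m₀ hm₀tmem hc
              rw [hs u y, hs w y, e1, e2, hs m₀ u, hs m₀ w, e3]
            · have hyt : y ∈ t := (htmem y).mpr (Or.inr ⟨hys, hyM⟩)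
              exact hRmod u hu w hw y hyt hyn
      · -- cross colors
        intro x hx y hy hyn
        obtain ⟨hmemR, hRt, hRne, hRmod⟩ := hparts _ (hπ x hx)
        set R := partf (if x ∈ M then m₀ else x) with hRdef
        by_cases hyM : y ∈ M
        · -- then m₀ ∉ R
          have hc : m₀ ∉ R := by
            intro hc
            apply hyn
            simp only [hpart, ← hRdef, if_pos hc]
            exact Finset.mem_union_right _ hyM
          by_cases hxM : x ∈ M
          · exfalso
            rw [if_pos hxM] at hmemR; exact hc hmemR
          · have e1 : c y x = c m₀ x := hMmod y hyM m₀ hm₀ x hx hxM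
            have := hcross x ((htmem x).mpr (Or.inr ⟨hx, hxM⟩)) m₀ hm₀tmem
              (by rw [hRdef, if_neg hxM] at hc; exact hc)
            rw [hs x y, e1, hs m₀ x]
            exact this
        · -- y ∉ M
          have hyR : y ∉ R := by
            intro hh
            apply hyn
            by_cases hc : m₀ ∈ R
            · simp only [hpart, ← hRdef, if_pos hc]
              refine Finset.mem_union_left _ (Finset.mem_sdiff.mpr ⟨hh, ?_⟩)
              simp only [Finset.mem_singleton]
              rintro rfl; exact hyM hm₀
            · simp only [hpart, ← hRdef, if_neg hc]; exact hh
          have hyt : y ∈ t := (htmem y).mpr (Or.inr ⟨hy, hyM⟩)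
          by_cases hxM : x ∈ M
          · have e1 : c x y = c m₀ y := hMmod x hxM m₀ hm₀ y hy hyM
            rw [e1]
            refine hcross m₀ hm₀tmem y hyt ?_
            rw [if_pos hxM] at hRdef; rw [← hRdef]; exact hyR
          · refine hcross x ((htmem x).mpr (Or.inr ⟨hx, hxM⟩)) y hyt ?_
            rw [if_neg hxM] at hRdef; rw [← hRdef]; exact hyR
      · -- coherence
        intro x hx y hy hyp
        obtain ⟨hmemR, hRt, hRne, hRmod⟩ := hparts _ (hπ x hx)
        set R := partf (if x ∈ M then m₀ else x) with hRdef
        have key : partf (if y ∈ M then m₀ else y) = R := by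
          by_cases hyM : y ∈ M
          · rw [if_pos hyM]
            have hc : m₀ ∈ R := by
              by_contra hc
              simp only [hpart, ← hRdef, if_neg hc] at hyp
              rcases (htmem y).mp (hRt hyp) with rfl | hy'
              · exact hc hyp
              · exact hy'.2 hyM
            exact hcoh _ (hπ x hx) m₀ hm₀tmem hc
          · rw [if_neg hyM]
            have hyR : y ∈ R := by
              by_cases hc : m₀ ∈ R
              · simp only [hpart, ← hRdef, if_pos hc, Finset.mem_union,
                  Finset.mem_sdiff] at hyp
                rcases hyp with ⟨h1, _⟩ | h2
                · exact h1
                · exact absurd h2 hyM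
              · simp only [hpart, ← hRdef, if_neg hc] at hyp
                exact hyp
            exact hcoh _ (hπ x hx) y ((htmem y).mpr (Or.inr ⟨hy, hyM⟩)) hyR
        simp only [hpart, ← hRdef, key]
set_option maxHeartbeats 4000000 in
theorem main (c : V → V → ℕ) (hsym : ∀ u v, c u v = c v u) (hrf : RF c) :
    ∀ n : ℕ, ∀ s : Finset V, s.card ≤ n →
      (∃ M, NTM c s M) ∨ ∃ a b, Bnd c s a b := by
  classical
  intro n
  induction n with
  | zero =>
    intro s hcard
    right
    refine ⟨0, 0, fun u hu w hw hne => absurd (Finset.one_lt_card.mpr ⟨u, hu, w, hw, hne⟩)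
      (by omega)⟩
  | succ n ih =>
    intro s hcard
    by_cases hsmall : s.card ≤ n
    · exact ih s hsmall
    have hn : s.card = n + 1 := by omega
    by_cases hle2 : s.card ≤ 2
    · right
      rcases Nat.lt_or_ge s.card 2 with hlt | hge
      · exact ⟨0, 0, fun u hu w hw hne => absurd (Finset.one_lt_card.mpr ⟨u, hu, w, hw, hne⟩)
          (by omega)⟩
      · have h2 : s.card = 2 := by omega
        obtain ⟨x, y, hxy, rfl⟩ := Finset.card_eq_two.mp h2
        refine ⟨c x y, c y x, ?_⟩
        intro u hu w hw hne
        simp only [Finset.mem_insert, Finset.mem_singleton] at hu hw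
        rcases hu with rfl | rfl <;> rcases hw with rfl | rfl <;> simp_all
    -- main step: 3 ≤ s.card
    have h3 : 3 ≤ s.card := by omega
    obtain ⟨v, hv⟩ : s.Nonempty := Finset.card_pos.mp (by omega)
    set s' := s.erase v with hs'def
    have hs'card : s'.card = n := by
      rw [hs'def, Finset.card_erase_of_mem hv]; omega
    have hs'sub : s' ⊆ s := Finset.erase_subset _ _
    have hvs' : v ∉ s' := Finset.notMem_erase _ _
    have hmem' : ∀ z, z ∈ s' ↔ z ∈ s ∧ z ≠ v := by
      intro z; rw [hs'def, Finset.mem_erase]; tauto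
    obtain ⟨a, b, part, hparts, hcross, hcoh⟩ :=
      gp_of c hsym hrf n ih n s' (le_of_eq hs'card) (le_of_eq hs'card) (by omega)
    -- abbreviations for part properties
    have hpmem : ∀ x ∈ s', x ∈ part x := fun x hx => (hparts x hx).1
    have hpsub : ∀ x ∈ s', part x ⊆ s' := fun x hx => (hparts x hx).2.1
    have hpne : ∀ x ∈ s', part x ≠ s' := fun x hx => (hparts x hx).2.2.1
    have hpmod : ∀ x ∈ s', ∀ u ∈ part x, ∀ w ∈ part x, ∀ y ∈ s', y ∉ part x →
        c u y = c w y := fun x hx => (hparts x hx).2.2.2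
    by_cases hconst : ∀ x ∈ s', ∀ y ∈ part x, c v y = c v x
    · -- CASE 1 : v is constant on every part
      set rep : V → V := fun z => if hz : (part z).Nonempty then hz.choose else z with hrep
      have hrepmem : ∀ z ∈ s', rep z ∈ part z := by
        intro z hz
        have hne : (part z).Nonempty := ⟨z, hpmem z hz⟩
        simp only [hrep, dif_pos hne]
        exact hne.choose_spec
      have hrepmem' : ∀ z ∈ s', rep z ∈ s' := fun z hz => hpsub z hz (hrepmem z hz)
      have hsamepart : ∀ y z, z ∈ s' → part y = part z → rep y = rep z := by
        intro y z hz h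
        have hne : (part z).Nonempty := ⟨z, hpmem z hz⟩
        simp only [hrep, h]
        rw [dif_pos hne, dif_pos hne]
      have hreppart : ∀ z ∈ s', part (rep z) = part z :=
        fun z hz => hcoh z hz (rep z) (hrepmem' z hz) (hrepmem z hz)
      have hrepidem : ∀ z ∈ s', rep (rep z) = rep z :=
        fun z hz => hsamepart (rep z) z hz (hreppart z hz)
      have hrepne : ∀ y ∈ s', ∀ z ∈ s', y ∉ part z → rep y ≠ rep z := by
        intro y hy z hz hyp heq
        apply hyp
        have h1 : part y = part (rep y) := (hreppart y hy).symm
        have h2 : part (rep z) = part z := hreppart z hz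
        have : part y = part z := by rw [h1, heq, h2]
        rw [← this]; exact hpmem y hy
      have hkey : ∀ u ∈ s', ∀ y ∈ s', y ∉ part u → c u y = c (rep u) (rep y) := by
        intro u hu y hy hyp
        have h1 : c u y = c (rep u) y :=
          hpmod u hu u (hpmem u hu) (rep u) (hrepmem u hu) y hy hyp
        have hups : rep u ∉ part y := by
          intro hh
          have h2 : part (rep u) = part y := hcoh y hy (rep u) (hrepmem' u hu) hh
          rw [hreppart u hu] at h2
          exact hyp (by rw [h2]; exact hpmem y hy)
        have h2 : c y (rep u) = c (rep y) (rep u) :=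
          hpmod y hy y (hpmem y hy) (rep y) (hrepmem y hy) (rep u) (hrepmem' u hu) hups
        rw [h1, hsym (rep u) y, h2, hsym (rep y) (rep u)]
      have hvc : ∀ z ∈ s', c v z = c v (rep z) :=
        fun z hz => (hconst z hz (rep z) (hrepmem z hz)).symm
      set t : Finset V := insert v (s'.image rep) with htdef
      have hvt : v ∈ t := Finset.mem_insert_self _ _
      have hrept : ∀ z ∈ s', rep z ∈ t :=
        fun z hz => Finset.mem_insert_of_mem (Finset.mem_image_of_mem rep hz)
      have htsub : t ⊆ s := by
        intro z hz
        rcases Finset.mem_insert.mp hz with rfl | hz'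
        · exact hv
        · obtain ⟨w, hw, rfl⟩ := Finset.mem_image.mp hz'
          exact hs'sub (hrepmem' w hw)
      have htmem : ∀ x, x ∈ t → x = v ∨ (x ∈ s' ∧ rep x = x) := by
        intro x hx
        rcases Finset.mem_insert.mp hx with rfl | hx'
        · exact Or.inl rfl
        · obtain ⟨w, hw, rfl⟩ := Finset.mem_image.mp hx'
          exact Or.inr ⟨hrepmem' w hw, hrepidem w hw⟩
      have hrepnev : ∀ z ∈ s', rep z ≠ v := by
        intro z hz heq
        exact hvs' (heq ▸ hrepmem' z hz)
      by_cases hbig : ∃ x ∈ s', 2 ≤ (part x).card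
      · -- some part is big : t is strictly smaller, use induction on t
        obtain ⟨x₁, hx₁, hx₁big⟩ := hbig
        obtain ⟨z₀, hz₀p, hz₀ne⟩ :=
          Finset.exists_mem_ne (s := part x₁) (by omega) (rep x₁)
        have hz₀s' : z₀ ∈ s' := hpsub x₁ hx₁ hz₀p
        have hz₀rep : rep z₀ = rep x₁ := by
          apply hsamepart
          · exact hx₁
          · exact hcoh x₁ hx₁ z₀ hz₀s' hz₀p
        have hz₀t : z₀ ∉ t := by
          intro hz₀t
          rcases htmem z₀ hz₀t with rfl | ⟨_, hz₀fix⟩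
          · exact hvs' hz₀s'
          · rw [hz₀rep] at hz₀fix
            exact hz₀ne hz₀fix.symm
        have htne : t ≠ s := by
          intro heq; exact hz₀t (heq ▸ hs'sub hz₀s')
        have htcard : t.card ≤ n := by
          have : t.card < s.card := Finset.card_lt_card (Finset.ssubset_iff_subset_ne.mpr ⟨htsub, htne⟩)
          omega
        rcases ih t htcard with ⟨N, hNt, hNcard, hNne, hNmod⟩ | ⟨α, β, hbnd⟩
        · -- lift the module of t
          left
          set Nh : Finset V := (if v ∈ N then {v} else ∅) ∪
            s'.filter (fun z => rep z ∈ N) with hNh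
          have hNhmem : ∀ x, x ∈ Nh ↔ ((x = v ∧ v ∈ N) ∨ (x ∈ s' ∧ rep x ∈ N)) := by
            intro x
            rw [hNh, Finset.mem_union, Finset.mem_filter]
            constructor
            · intro hx
              rcases hx with hx | hx
              · by_cases hvN : v ∈ N
                · rw [if_pos hvN] at hx
                  exact Or.inl ⟨Finset.mem_singleton.mp hx, hvN⟩
                · rw [if_neg hvN] at hx; simp at hx
              · exact Or.inr hx
            · intro hx
              rcases hx with ⟨rfl, hvN⟩ | hx
              · left; rw [if_pos hvN]; exact Finset.mem_singleton_self _
              · exact Or.inr hx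
          have hNhsub : Nh ⊆ s := by
            intro z hz
            rcases (hNhmem z).mp hz with ⟨rfl, _⟩ | ⟨hz', _⟩
            · exact hv
            · exact hs'sub hz'
          -- color transfer
          have htrans : ∀ u, u ∈ Nh → ∀ y ∈ s, y ∉ Nh →
              c u y = c (if u = v then v else rep u) (if y = v then v else rep y) := by
            intro u hu y hy hyn
            by_cases huv : u = v
            · rw [if_pos huv, huv]
              by_cases hyv : y = v
              · exfalso
                have huy : u = y := huv.trans hyv.symm
                exact hyn (huy ▸ hu)
              · rw [if_neg hyv]
                exact hvc y ((hmem' y).mpr ⟨hy, hyv⟩)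
            · have hu' : u ∈ s' := by
                rcases (hNhmem u).mp hu with ⟨h1, _⟩ | ⟨h1, _⟩
                · exact absurd h1 huv
                · exact h1
              by_cases hyv : y = v
              · subst hyv
                rw [if_neg huv, if_pos rfl]
                rw [hsym u y, hsym (rep u) y]
                exact hvc u hu'
              · have hy' : y ∈ s' := (hmem' y).mpr ⟨hy, hyv⟩
                rw [if_neg huv, if_neg hyv]
                have hrepuN : rep u ∈ N := by
                  rcases (hNhmem u).mp hu with ⟨h1, _⟩ | ⟨_, h2⟩
                  · exact absurd h1 huv
                  · exact h2
                have hyp : y ∉ part u := by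
                  intro hyp
                  apply hyn
                  rw [hNhmem]
                  refine Or.inr ⟨hy', ?_⟩
                  rw [hsamepart y u hu' (hcoh u hu' y hy' hyp)]
                  exact hrepuN
                exact hkey u hu' y hy' hyp
          refine ⟨Nh, hNhsub, ?_, ?_, ?_⟩
          · -- card ≥ 2
            obtain ⟨γ₁, hγ₁, γ₂, hγ₂, hγne⟩ := Finset.one_lt_card.mp hNcard
            have hlift : ∀ γ ∈ N, ∃ x ∈ Nh, (if x = v then v else rep x) = γ := by
              intro γ hγ
              rcases htmem γ (hNt hγ) with heq | ⟨hγ', hγfix⟩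
              · exact ⟨v, (hNhmem v).mpr (Or.inl ⟨rfl, heq ▸ hγ⟩),
                  by rw [if_pos rfl]; exact heq.symm⟩
              · have hγv : γ ≠ v := fun hh => hvs' (hh ▸ hγ')
                refine ⟨γ, (hNhmem γ).mpr (Or.inr ⟨hγ', by rw [hγfix]; exact hγ⟩), ?_⟩
                rw [if_neg hγv]
                exact hγfix
            obtain ⟨x₁', hx₁', hx₁'eq⟩ := hlift γ₁ hγ₁
            obtain ⟨x₂', hx₂', hx₂'eq⟩ := hlift γ₂ hγ₂
            refine Finset.one_lt_card.mpr ⟨x₁', hx₁', x₂', hx₂', ?_⟩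
            intro heq
            rw [heq] at hx₁'eq
            exact hγne (hx₁'eq.symm.trans hx₂'eq)
          · -- Nh ≠ s
            obtain ⟨γ₀, hγ₀t, hγ₀N⟩ := Finset.exists_of_ssubset
              (Finset.ssubset_iff_subset_ne.mpr ⟨hNt, hNne⟩)
            rcases htmem γ₀ hγ₀t with heq | ⟨hγ₀', hγ₀fix⟩
            · intro heq2
              have : γ₀ ∈ Nh := heq2 ▸ (heq ▸ hv)
              rcases (hNhmem γ₀).mp this with ⟨_, hvN⟩ | ⟨hz', _⟩
              · exact hγ₀N (heq ▸ hvN)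
              · exact hvs' (heq ▸ hz')
            · intro heq
              have : γ₀ ∈ Nh := heq ▸ hs'sub hγ₀'
              rcases (hNhmem γ₀).mp this with ⟨h1, _⟩ | ⟨_, h2⟩
              · exact hvs' (h1 ▸ hγ₀')
              · exact hγ₀N (hγ₀fix ▸ h2)
          · -- module property
            intro u hu w hw y hy hyn
            have e1 := htrans u hu y hy hyn
            have e2 := htrans w hw y hy hyn
            have hpru : (if u = v then v else rep u) ∈ N := by
              rcases (hNhmem u).mp hu with ⟨huv, hvN⟩ | ⟨hu', h2⟩
              · rw [if_pos huv]; exact hvN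
              · have hne' : u ≠ v := fun hh => hvs' (hh ▸ hu')
                rw [if_neg hne']; exact h2
            have hprw : (if w = v then v else rep w) ∈ N := by
              rcases (hNhmem w).mp hw with ⟨hwv, hvN⟩ | ⟨hw', h2⟩
              · rw [if_pos hwv]; exact hvN
              · have hne' : w ≠ v := fun hh => hvs' (hh ▸ hw')
                rw [if_neg hne']; exact h2
            have hpryt : (if y = v then v else rep y) ∈ t := by
              by_cases hyv : y = v
              · rw [if_pos hyv]; exact hvt
              · rw [if_neg hyv]; exact hrept y ((hmem' y).mpr ⟨hy, hyv⟩)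
            have hpryN : (if y = v then v else rep y) ∉ N := by
              by_cases hyv : y = v
              · rw [if_pos hyv]
                intro hvN
                exact hyn ((hNhmem y).mpr (Or.inl ⟨hyv, hvN⟩))
              · rw [if_neg hyv]
                intro hrepN
                exact hyn ((hNhmem y).mpr (Or.inr ⟨(hmem' y).mpr ⟨hy, hyv⟩, hrepN⟩))
            rw [e1, e2]
            exact hNmod _ hpru _ hprw _ hpryt hpryN
        · -- bound on t : either global bound or a confined edge
          by_cases Hgl : ∀ u ∈ s, ∀ w ∈ s, u ≠ w → c u w = α ∨ c u w = β
          · exact Or.inr ⟨α, β, Hgl⟩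
          · left
            push_neg at Hgl
            obtain ⟨u, hu, w, hw, hune, hua, hub⟩ := Hgl
            set h : ℕ := c u w with hh
            have hvedge : ∀ w' ∈ s', c v w' = α ∨ c v w' = β := by
              intro w' hw'
              rw [hvc w' hw']
              exact hbnd v hvt (rep w') (hrept w' hw') (hrepnev w' hw').symm
            have huv : u ≠ v := by
              rintro rfl
              have hw' : w ∈ s' := (hmem' w).mpr ⟨hw, fun hh' => hune hh'.symm⟩
              rcases hvedge w hw' with h1 | h1
              · exact hua h1
              · exact hub h1
            have hwv : w ≠ v := by
              intro hwv
              have hu' : u ∈ s' := (hmem' u).mpr ⟨hu, huv⟩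
              rcases hvedge u hu' with h1 | h1
              · exact hua (by rw [hh, hsym u w, hwv]; exact h1)
              · exact hub (by rw [hh, hsym u w, hwv]; exact h1)
            have hu' : u ∈ s' := (hmem' u).mpr ⟨hu, huv⟩
            have hw' : w ∈ s' := (hmem' w).mpr ⟨hw, hwv⟩
            have hwpu : w ∈ part u := by
              by_contra hwpu
              have := hkey u hu' w hw' hwpu
              have hne2 : rep u ≠ rep w := fun heq => (hrepne w hw' u hu' hwpu) heq.symm
              rcases hbnd (rep u) (hrept u hu') (rep w) (hrept w hw') hne2 with h1 | h1
              · exact hua (by rw [hh, this]; exact h1)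
              · exact hub (by rw [hh, this]; exact h1)
            refine conf c hsym hrf s h u w (part u) (fun z hz => hs'sub (hpsub u hu' hz))
              ?_ (hpmem u hu') hw hune rfl v hv (fun hh' => hvs' (hpsub u hu' hh'))
            intro y hyp z hz hzp
            have hy' : y ∈ s' := hpsub u hu' hyp
            by_cases hzv : z = v
            · intro hcy
              rw [hzv] at hcy
              rcases hvedge y hy' with h1 | h1
              · exact hua (by rw [← hcy, hsym y v]; exact h1)
              · exact hub (by rw [← hcy, hsym y v]; exact h1)
            · have hz' : z ∈ s' := (hmem' z).mpr ⟨hz, hzv⟩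
              have hpyu : part y = part u := hcoh u hu' y hy' hyp
              have hzpy : z ∉ part y := by rw [hpyu]; exact hzp
              have := hkey y hy' z hz' hzpy
              have hne2 : rep y ≠ rep z := fun heq => (hrepne z hz' y hy' hzpy) heq.symm
              intro hcy
              rcases hbnd (rep y) (hrept y hy') (rep z) (hrept z hz') hne2 with h1 | h1
              · exact hua (by rw [← hcy, this]; exact h1)
              · exact hub (by rw [← hcy, this]; exact h1)
      · -- all parts are singletons : s' is 2-colored
        push_neg at hbig
        have hsing : ∀ x ∈ s', part x = {x} := by
          intro x hx
          have h1 : (part x).card ≤ 1 := by have := hbig x hx; omega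
          have h2 := hpmem x hx
          apply Finset.eq_singleton_iff_unique_mem.mpr
          exact ⟨h2, fun y hy => Finset.card_le_one.mp h1 y hy x h2⟩
        have hab : ∀ y ∈ s', ∀ z ∈ s', y ≠ z → c y z = a ∨ c y z = b := by
          intro y hy z hz hne
          refine hcross y hy z hz ?_
          rw [hsing y hy, Finset.mem_singleton]
          exact fun hh => hne hh.symm
        by_cases HE : ∀ w ∈ s', c v w = a ∨ c v w = b
        · right
          refine ⟨a, b, ?_⟩
          intro x hx y hy hne
          by_cases hxv : x = v
          · rw [hxv]
            exact HE y ((hmem' y).mpr ⟨hy, fun hh => hne (hxv.trans hh.symm)⟩)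
          · by_cases hyv : y = v
            · rw [hyv, hsym x v]
              exact HE x ((hmem' x).mpr ⟨hx, hxv⟩)
            · exact hab x ((hmem' x).mpr ⟨hx, hxv⟩) y ((hmem' y).mpr ⟨hy, hyv⟩) hne
        · push_neg at HE
          obtain ⟨w₀, hw₀, hw₀a, hw₀b⟩ := HE
          left
          set e : ℕ := c v w₀ with he
          by_cases hNfull : ∀ w ∈ s', c v w = e
          · refine ⟨s', hs'sub, by omega, ?_, ?_⟩
            · intro heq; exact hvs' (heq ▸ hv)
            · intro p hp q hq y hy hyn
              have hyv : y = v := by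
                by_contra hyv
                exact hyn ((hmem' y).mpr ⟨hy, hyv⟩)
              subst hyv
              rw [hsym p y, hsym q y, hNfull p hp, hNfull q hq]
          · push_neg at hNfull
            obtain ⟨y₀, hy₀, hy₀e⟩ := hNfull
            set W : Finset V := insert v (s'.filter (fun z => c v z = e)) with hW
            have hWmem : ∀ x, x ∈ W ↔ (x = v ∨ (x ∈ s' ∧ c v x = e)) := by
              intro x
              rw [hW, Finset.mem_insert, Finset.mem_filter]
            refine ⟨W, ?_, ?_, ?_, ?_⟩
            · intro z hz
              rcases (hWmem z).mp hz with rfl | ⟨hz', _⟩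
              · exact hv
              · exact hs'sub hz'
            · refine Finset.one_lt_card.mpr ⟨v, (hWmem v).mpr (Or.inl rfl), w₀,
                (hWmem w₀).mpr (Or.inr ⟨hw₀, rfl⟩), ?_⟩
              intro heq; exact hvs' (heq ▸ hw₀)
            · intro heq
              have hy₀W : y₀ ∈ W := heq ▸ hs'sub hy₀
              rcases (hWmem y₀).mp hy₀W with heq2 | ⟨_, h2⟩
              · exact hvs' (heq2 ▸ hy₀)
              · exact hy₀e h2
            · intro p hp q hq y hy hyn
              have hyv : y ≠ v := by
                rintro rfl
                exact hyn ((hWmem y).mpr (Or.inl rfl))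
              have hy' : y ∈ s' := (hmem' y).mpr ⟨hy, hyv⟩
              have hye : c v y ≠ e := by
                intro hh
                exact hyn ((hWmem y).mpr (Or.inr ⟨hy', hh⟩))
              have key : ∀ p' ∈ W, c p' y = c v y := by
                intro p' hp'
                rcases (hWmem p').mp hp' with rfl | ⟨hp'', hpe⟩
                · rfl
                · have hpv : p' ≠ v := fun hh => hvs' (hh ▸ hp'')
                  have hpy : p' ≠ y := by
                    rintro rfl
                    exact hye hpe
                  rcases hrf p' v y hpv hpy (fun hh => hyv hh.symm) with h1 | h1 | h1
                  · exfalso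
                    have hE : c p' y = e := by rw [← h1, hsym p' v]; exact hpe
                    rcases hab p' hp'' y hy' hpy with h2 | h2
                    · exact hw₀a (by rw [← hE]; exact h2)
                    · exact hw₀b (by rw [← hE]; exact h2)
                  · exfalso
                    exact hye (by rw [← h1, hsym p' v]; exact hpe)
                  · exact h1
              rw [key p hp, key q hq]
    · -- CASE 2 : v is non-constant on some part
      push_neg at hconst
      obtain ⟨x₀, hx₀s', m₁, hm₁p, hm₁ne⟩ := hconst
      set Q : Finset V := part x₀ with hQdef
      have hQmem : x₀ ∈ Q := hpmem x₀ hx₀s'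
      have hQsub : Q ⊆ s' := hpsub x₀ hx₀s'
      have hQne : Q ≠ s' := hpne x₀ hx₀s'
      have hQmod : ∀ u ∈ Q, ∀ w ∈ Q, ∀ y ∈ s', y ∉ Q → c u y = c w y := hpmod x₀ hx₀s'
      have hm₁s' : m₁ ∈ s' := hQsub hm₁p
      have hm₁x₀ : m₁ ≠ x₀ := fun hh => hm₁ne (by rw [hh])
      have hvx₀ : v ≠ x₀ := fun hh => hvs' (hh ▸ hx₀s')
      have hvm₁ : v ≠ m₁ := fun hh => hvs' (hh ▸ hm₁s')
      -- common color from outside vertices to Q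
      have hd : ∀ z ∈ s', z ∉ Q → ∀ m ∈ Q, c z m = c z x₀ := by
        intro z hz hzQ m hm
        have := hQmod m hm x₀ hQmem z hz hzQ
        rw [hsym z m, this, hsym x₀ z]
      have hx₀np : ∀ z ∈ s', z ∉ Q → x₀ ∉ part z := by
        intro z hz hzQ hx₀p
        apply hzQ
        have h1 : part x₀ = part z := hcoh z hz x₀ hx₀s' hx₀p
        rw [hQdef, h1]
        exact hpmem z hz
      have hdisj : ∀ z ∈ s', z ∉ Q → ∀ x ∈ part z, x ∉ Q := by
        intro z hz hzQ x hx hxQ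
        have hxs' : x ∈ s' := hpsub z hz hx
        have h1 : part x = part z := hcoh z hz x hxs' hx
        have h2 : part x = Q := by
          rw [hQdef]
          exact hcoh x₀ hx₀s' x hxs' hxQ
        apply hzQ
        rw [← h2, h1]
        exact hpmem z hz
      have hdab : ∀ z ∈ s', z ∉ Q → c z x₀ = a ∨ c z x₀ = b := by
        intro z hz hzQ
        rw [hsym z x₀]
        have := hcross x₀ hx₀s' z hz ?_
        · rcases this with h1 | h1
          · exact Or.inl h1
          · exact Or.inr h1
        · intro hzp
          apply hzQ
          rw [hQdef]
          exact hzp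
      by_cases hBne : ∃ x ∈ s', x ∉ Q ∧ c x v ≠ c x x₀
      swap
      · -- B is empty : insert v Q is a module of s
        push_neg at hBne
        left
        obtain ⟨y₁, hy₁s', hy₁Q⟩ : ∃ y ∈ s', y ∉ Q := by
          by_contra hcon
          push_neg at hcon
          exact hQne (Finset.Subset.antisymm hQsub hcon)
        refine ⟨insert v Q, ?_, ?_, ?_, ?_⟩
        · intro z hz
          rcases Finset.mem_insert.mp hz with rfl | hz'
          · exact hv
          · exact hs'sub (hQsub hz')
        · refine Finset.one_lt_card.mpr ⟨v, Finset.mem_insert_self _ _, x₀,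
            Finset.mem_insert_of_mem hQmem, hvx₀⟩
        · intro heq
          have : y₁ ∈ insert v Q := heq ▸ hs'sub hy₁s'
          rcases Finset.mem_insert.mp this with heq2 | h2
          · exact hvs' (heq2 ▸ hy₁s')
          · exact hy₁Q h2
        · intro p hp q hq y hy hyn
          have hyv : y ≠ v := fun hh => hyn (hh ▸ Finset.mem_insert_self _ _)
          have hy' : y ∈ s' := (hmem' y).mpr ⟨hy, hyv⟩
          have hyQ : y ∉ Q := fun hh => hyn (Finset.mem_insert_of_mem hh)
          have key : ∀ p' ∈ insert v Q, c p' y = c y x₀ := by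
            intro p' hp'
            rcases Finset.mem_insert.mp hp' with rfl | hp''
            · rw [hsym p' y]
              exact hBne y hy' hyQ
            · rw [hsym p' y]
              exact hd y hy' hyQ p' hp''
          rw [key p hp, key q hq]
      -- B is nonempty
      obtain ⟨xB, hxBs', hxBQ, hxBflag⟩ := hBne
      set g : ℕ := c xB x₀ with hgdef
      set e : ℕ := c xB v with hedef
      have hge : e ≠ g := hxBflag
      have hxBv : xB ≠ v := fun hh => hvs' (hh ▸ hxBs')
      -- colors of v into Q
      have hBv : ∀ x ∈ s', x ∉ Q → c x v ≠ c x x₀ →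
          ∀ m ∈ Q, c v m = c x v ∨ c v m = c x x₀ := by
        intro x hx hxQ hflag m hm
        have hxm : x ≠ m := fun hh => hxQ (hh ▸ hm)
        have hxv : x ≠ v := fun hh => hvs' (hh ▸ hx)
        have hvm : v ≠ m := fun hh => hvs' (hh ▸ hQsub hm)
        have hxmx₀ : c x m = c x x₀ := hd x hx hxQ m hm
        rcases hrf x v m hxv hxm hvm with h1 | h1 | h1
        · exact absurd (h1.trans hxmx₀) hflag
        · exact Or.inl h1.symm
        · exact Or.inr (h1.symm.trans hxmx₀)
      have hvQ : ∀ m ∈ Q, c v m = e ∨ c v m = g :=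
        fun m hm => hBv xB hxBs' hxBQ hxBflag m hm
      -- the two colors of v on Q are exactly {e, g}
      have hvm₁eg := hvQ m₁ hm₁p
      have hvx₀eg := hvQ x₀ hQmem
      -- every B vertex has the same pattern
      have hBpair : ∀ x ∈ s', x ∉ Q → c x v ≠ c x x₀ →
          (c x v = e ∧ c x x₀ = g) ∨ (c x v = g ∧ c x x₀ = e) := by
        intro x hx hxQ hflag
        have h1 := hBv x hx hxQ hflag m₁ hm₁p
        have h2 := hBv x hx hxQ hflag x₀ hQmem
        have hne12 : c v m₁ ≠ c v x₀ := hm₁ne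
        rcases hvm₁eg with hA | hA <;> rcases hvx₀eg with hB | hB <;>
          rcases h1 with h1 | h1 <;> rcases h2 with h2 | h2 <;> omega
      have hgab : g = a ∨ g = b := by
        have := hdab xB hxBs' hxBQ
        rw [← hgdef] at this
        exact this
      by_cases hE : e = a ∨ e = b
      · -- CASE (i) : both colors of v on Q are cross colors
        have hset : ∀ t : ℕ, t = a ∨ t = b → t = g ∨ t = e := by
          intro t ht
          rcases hgab with h1 | h1 <;> rcases hE with h2 | h2 <;> omega
        have hvall : ∀ w ∈ s', c v w = g ∨ c v w = e := by
          intro w hw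
          by_cases hwQ : w ∈ Q
          · rcases hvQ w hwQ with h1 | h1
            · exact Or.inr h1
            · exact Or.inl h1
          · by_cases hwfl : c w v ≠ c w x₀
            · rcases hBpair w hw hwQ hwfl with ⟨h1, _⟩ | ⟨h1, _⟩
              · exact Or.inr (by rw [hsym v w]; exact h1)
              · exact Or.inl (by rw [hsym v w]; exact h1)
            · push_neg at hwfl
              have := hset (c w x₀) (hdab w hw hwQ)
              rw [hsym v w, hwfl]
              exact this
        by_cases Hge : ∀ u ∈ s, ∀ w ∈ s, u ≠ w → c u w = g ∨ c u w = e
        · exact Or.inr ⟨g, e, Hge⟩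
        left
        push_neg at Hge
        obtain ⟨u, hu, w, hw, hune, hug, hue⟩ := Hge
        have huv : u ≠ v := by
          rintro rfl
          have hw' : w ∈ s' := (hmem' w).mpr ⟨hw, fun hh => hune hh.symm⟩
          rcases hvall w hw' with h1 | h1
          · exact hug h1
          · exact hue h1
        have hwv : w ≠ v := by
          intro hwv
          have hu' : u ∈ s' := (hmem' u).mpr ⟨hu, huv⟩
          rcases hvall u hu' with h1 | h1
          · exact hug (by rw [hsym u w, hwv]; exact h1)
          · exact hue (by rw [hsym u w, hwv]; exact h1)
        have hu' : u ∈ s' := (hmem' u).mpr ⟨hu, huv⟩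
        have hw' : w ∈ s' := (hmem' w).mpr ⟨hw, hwv⟩
        -- the CROSS lemma
        have hCROSS : ∀ y ∈ s', ∀ z ∈ s', y ≠ z →
            (c y z = g ∨ c y z = e) ∨
            ((y ∈ Q ↔ z ∈ Q) ∧ c v y = c v z ∧
              (y ∉ Q → (c y v ≠ c y x₀ ↔ c z v ≠ c z x₀))) := by
          intro y hy z hz hyz
          have hyv : y ≠ v := fun hh => hvs' (hh ▸ hy)
          have hzv : z ≠ v := fun hh => hvs' (hh ▸ hz)
          by_cases hcv : c v y = c v z
          · by_cases hyQ : y ∈ Q <;> by_cases hzQ : z ∈ Q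
            · exact Or.inr ⟨by tauto, hcv, fun hc => absurd hyQ hc⟩
            · -- y ∈ Q, z ∉ Q
              left
              have h1 : c y z = c z x₀ := by
                rw [hsym y z]; exact hd z hz hzQ y hyQ
              rw [h1]
              exact hset _ (hdab z hz hzQ)
            · left
              rw [hd y hy hyQ z hzQ]
              exact hset _ (hdab y hy hyQ)
            · -- both outside Q
              by_cases hyfl : c y v ≠ c y x₀ <;> by_cases hzfl : c z v ≠ c z x₀
              · exact Or.inr ⟨by tauto, hcv, fun _ => by tauto⟩
              · -- y in B, z in G
                push_neg at hzfl
                have hnex₀ : c y x₀ ≠ c z x₀ := by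
                  intro hh
                  apply hyfl
                  rw [hsym y v, hcv, hsym v z, hzfl, ← hh]
                left
                have hyx₀ : y ≠ x₀ := fun hh => hyQ (hh ▸ hQmem)
                have hzx₀ : z ≠ x₀ := fun hh => hzQ (hh ▸ hQmem)
                rcases hrf y x₀ z hyx₀ hyz (fun hh => hzx₀ hh.symm) with h1 | h1 | h1
                · rw [← h1]
                  exact hset _ (hdab y hy hyQ)
                · exact absurd (h1.trans (hsym x₀ z)) hnex₀
                · rw [h1, hsym x₀ z]
                  exact hset _ (hdab z hz hzQ)
              · -- y in G, z in B
                push_neg at hyfl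
                have hnex₀ : c y x₀ ≠ c z x₀ := by
                  intro hh
                  apply hzfl
                  rw [hsym z v, ← hcv, hsym v y, hyfl, hh]
                left
                have hyx₀ : y ≠ x₀ := fun hh => hyQ (hh ▸ hQmem)
                have hzx₀ : z ≠ x₀ := fun hh => hzQ (hh ▸ hQmem)
                rcases hrf y x₀ z hyx₀ hyz (fun hh => hzx₀ hh.symm) with h1 | h1 | h1
                · rw [← h1]
                  exact hset _ (hdab y hy hyQ)
                · exact absurd (h1.trans (hsym x₀ z)) hnex₀
                · rw [h1, hsym x₀ z]
                  exact hset _ (hdab z hz hzQ)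
              · push_neg at hyfl hzfl
                exact Or.inr ⟨by tauto, hcv, fun _ => by constructor <;> intro hh <;> tauto⟩
          · left
            rcases hrf v y z (fun hh => hyv hh.symm) (fun hh => hzv hh.symm) hyz
              with h1 | h1 | h1
            · exact absurd h1 hcv
            · rw [← h1]
              exact hvall y hy
            · rw [← h1]
              exact hvall z hz
        -- u and w lie in the same sector
        have hmatch := hCROSS u hu' w hw' hune
        rcases hmatch with hL | ⟨hiff, hcveq, hflag⟩
        · rcases hL with h1 | h1
          · exact absurd h1 hug
          · exact absurd h1 hue
        set P : Finset V := s'.filter (fun z =>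
          (z ∈ Q ↔ u ∈ Q) ∧ c v z = c v u ∧
            (z ∉ Q → (c z v ≠ c z x₀ ↔ c u v ≠ c u x₀))) with hPdef
        have hPmem : ∀ z, z ∈ P ↔ (z ∈ s' ∧ ((z ∈ Q ↔ u ∈ Q) ∧ c v z = c v u ∧
            (z ∉ Q → (c z v ≠ c z x₀ ↔ c u v ≠ c u x₀)))) := by
          intro z
          rw [hPdef, Finset.mem_filter]
        have huP : u ∈ P := (hPmem u).mpr ⟨hu', Iff.rfl, rfl, fun _ => Iff.rfl⟩
        have hwP : w ∈ P := by
          refine (hPmem w).mpr ⟨hw', hiff.symm, hcveq.symm, ?_⟩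
          intro hwQ
          have huQ : u ∉ Q := fun hh => hwQ (hiff.mp hh)
          exact (hflag huQ).symm
        refine conf c hsym hrf s (c u w) u w P
          (fun z hz => hs'sub ((hPmem z).mp hz).1) ?_ huP hw hune rfl v hv
          (fun hh => hvs' ((hPmem v).mp hh).1)
        intro y hyP z hz hzP
        obtain ⟨hy', hymatch⟩ := (hPmem y).mp hyP
        by_cases hzv : z = v
        · intro hcy
          rw [hzv] at hcy
          rcases hvall y hy' with h1 | h1
          · exact hug (by rw [← hcy, hsym y v]; exact h1)
          · exact hue (by rw [← hcy, hsym y v]; exact h1)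
        · have hz' : z ∈ s' := (hmem' z).mpr ⟨hz, hzv⟩
          have hyz : y ≠ z := fun hh => hzP (hh ▸ hyP)
          intro hcy
          rcases hCROSS y hy' z hz' hyz with hL | ⟨hiff2, hcveq2, hflag2⟩
          · rcases hL with h1 | h1
            · exact hug (hcy ▸ h1)
            · exact hue (hcy ▸ h1)
          · apply hzP
            refine (hPmem z).mpr ⟨hz', ?_, ?_, ?_⟩
            · exact hiff2.symm.trans hymatch.1
            · exact hcveq2.symm.trans hymatch.2.1
            · intro hzQ
              have hyQ : y ∉ Q := fun hh => hzQ (hiff2.mp hh)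
              exact ((hflag2 hyQ).symm.trans (hymatch.2.2 hyQ))
      · -- CASE (ii) : e is not a cross color
        push_neg at hE
        obtain ⟨hea, heb⟩ := hE
        have hBgood : ∀ x ∈ s', x ∉ Q → c x v ≠ c x x₀ →
            c x v = e ∧ c x x₀ = g := by
          intro x hx hxQ hflag
          rcases hBpair x hx hxQ hflag with h1 | ⟨_, h2⟩
          · exact h1
          · exfalso
            rcases hdab x hx hxQ with h3 | h3
            · exact hea (by rw [← h2, h3])
            · exact heb (by rw [← h2, h3])
        by_cases hpure : ∃ z ∈ s', z ∉ Q ∧ ∀ x ∈ part z, c x v = c x x₀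
        · -- a pure G-part exists : big module
          left
          obtain ⟨z₁, hz₁s', hz₁Q, hz₁pure⟩ := hpure
          set Z : Finset V := insert v (s'.filter (fun z =>
            z ∈ Q ∨ ∃ x ∈ part z, c x v ≠ c x x₀)) with hZdef
          have hZmem : ∀ z, z ∈ Z ↔ (z = v ∨ (z ∈ s' ∧
              (z ∈ Q ∨ ∃ x ∈ part z, c x v ≠ c x x₀))) := by
            intro z
            rw [hZdef, Finset.mem_insert, Finset.mem_filter]
          refine ⟨Z, ?_, ?_, ?_, ?_⟩
          · intro z hz
            rcases (hZmem z).mp hz with rfl | ⟨hz', _⟩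
            · exact hv
            · exact hs'sub hz'
          · refine Finset.one_lt_card.mpr ⟨v, (hZmem v).mpr (Or.inl rfl), x₀,
              (hZmem x₀).mpr (Or.inr ⟨hx₀s', Or.inl hQmem⟩), hvx₀⟩
          · intro heq
            have hz₁Z : z₁ ∈ Z := heq ▸ hs'sub hz₁s'
            rcases (hZmem z₁).mp hz₁Z with heq2 | ⟨_, hcase⟩
            · exact hvs' (heq2 ▸ hz₁s')
            · rcases hcase with h1 | ⟨x, hx, hxflag⟩
              · exact hz₁Q h1
              · exact hxflag (hz₁pure x hx)
          · intro p hp q hq y hy hyn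
            have hyv : y ≠ v := fun hh => hyn ((hZmem y).mpr (Or.inl hh))
            have hy' : y ∈ s' := (hmem' y).mpr ⟨hy, hyv⟩
            have hyQ : y ∉ Q := fun hh =>
              hyn ((hZmem y).mpr (Or.inr ⟨hy', Or.inl hh⟩))
            have hypure : ∀ x ∈ part y, c x v = c x x₀ := by
              intro x hx
              by_contra hflag
              exact hyn ((hZmem y).mpr (Or.inr ⟨hy', Or.inr ⟨x, hx, hflag⟩⟩))
            have hyflag : c y v = c y x₀ := hypure y (hpmem y hy')
            have key : ∀ p' ∈ Z, c p' y = c y x₀ := by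
              intro p' hp'
              rcases (hZmem p').mp hp' with rfl | ⟨hp'', hcase⟩
              · rw [hsym p' y, hyflag]
              · by_cases hp'Q : p' ∈ Q
                · rw [hsym p' y]
                  exact hd y hy' hyQ p' hp'Q
                · rcases hcase with hp'Q2 | ⟨x', hx'p, hx'flag⟩
                  · exact absurd hp'Q2 hp'Q
                  -- p' is in a part meeting B, with witness x'
                  have hx's' : x' ∈ s' := hpsub p' hp'' hx'p
                  have hx'v : x' ≠ v := fun hh => hvs' (hh ▸ hx's')
                  have hynp : y ∉ part p' := by
                    intro hyinp
                    have heqp : part y = part p' := hcoh p' hp'' y hy' hyinp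
                    exact hx'flag (hypure x' (by rw [heqp]; exact hx'p))
                  have hx'Q : x' ∉ Q := hdisj p' hp'' hp'Q x' hx'p
                  obtain ⟨hx'e, hx'g⟩ := hBgood x' hx's' hx'Q hx'flag
                  have hx'npy : x' ∉ part y := by
                    intro hh
                    exact hx'flag (hypure x' hh)
                  have hyx' : y ≠ x' := fun hh => hynp (hh ▸ hx'p)
                  have step1 : c p' y = c x' y :=
                    hpmod p' hp'' p' (hpmem p' hp'') x' hx'p y hy' hynp
                  have step2 : c y x' = c y x₀ := by
                    rcases hrf y x' v hyx' hyv hx'v with h1 | h1 | h1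
                    · rw [h1, hyflag]
                    · exfalso
                      have h1' : c y x' = e := by rw [h1, hx'e]
                      rcases hcross y hy' x' hx's' hx'npy with h2 | h2
                      · exact hea (by rw [← h1', h2])
                      · exact heb (by rw [← h1', h2])
                    · exfalso
                      rw [hx'e] at h1
                      rw [hyflag] at h1
                      rcases hdab y hy' hyQ with h2 | h2
                      · exact hea (by rw [← h1, h2])
                      · exact heb (by rw [← h1, h2])
                  rw [step1, hsym x' y, step2]
            rw [key p hp, key q hq]
        · -- every part outside Q meets B
          push_neg at hpure
          have hvge : ∀ w ∈ s', c v w = g ∨ c v w = e := by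
            intro w hw
            by_cases hwQ : w ∈ Q
            · rcases hvQ w hwQ with h1 | h1
              · exact Or.inr h1
              · exact Or.inl h1
            · obtain ⟨x', hx'p, hx'flag⟩ := hpure w hw hwQ
              have hx's' : x' ∈ s' := hpsub w hw hx'p
              have hx'Q : x' ∉ Q := hdisj w hw hwQ x' hx'p
              obtain ⟨hx'e, hx'g⟩ := hBgood x' hx's' hx'Q hx'flag
              by_cases hwfl : c w v ≠ c w x₀
              · obtain ⟨hwe, _⟩ := hBgood w hw hwQ hwfl
                exact Or.inr (by rw [hsym v w]; exact hwe)
              · push_neg at hwfl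
                have hx₀npw : x₀ ∉ part w := hx₀np w hw hwQ
                have hstep : c w x₀ = c x' x₀ :=
                  hpmod w hw w (hpmem w hw) x' hx'p x₀ hx₀s' hx₀npw
                left
                rw [hsym v w, hwfl, hstep, hx'g]
          by_cases Hge : ∀ u ∈ s, ∀ w ∈ s, u ≠ w → c u w = g ∨ c u w = e
          · exact Or.inr ⟨g, e, Hge⟩
          left
          push_neg at Hge
          obtain ⟨u, hu, w, hw, hune, hug, hue⟩ := Hge
          have huv : u ≠ v := by
            rintro rfl
            have hw' : w ∈ s' := (hmem' w).mpr ⟨hw, fun hh => hune hh.symm⟩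
            rcases hvge w hw' with h1 | h1
            · exact hug h1
            · exact hue h1
          have hwv : w ≠ v := by
            intro hwv
            have hu' : u ∈ s' := (hmem' u).mpr ⟨hu, huv⟩
            rcases hvge u hu' with h1 | h1
            · exact hug (by rw [hsym u w, hwv]; exact h1)
            · exact hue (by rw [hsym u w, hwv]; exact h1)
          have hu' : u ∈ s' := (hmem' u).mpr ⟨hu, huv⟩
          have hw' : w ∈ s' := (hmem' w).mpr ⟨hw, hwv⟩
          by_cases hab' : c u w = a ∨ c u w = b
          · -- the edge color is a cross color : avoid v
            refine comp_avoid c hsym hrf s (c u w) u w hu hw hune rfl v hv ?_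
            intro x hxs hxv hcx
            have hx' : x ∈ s' := (hmem' x).mpr ⟨hxs, hxv⟩
            rcases hvge x hx' with h1 | h1
            · exact hug (by rw [← hcx, h1])
            · exact hue (by rw [← hcx, h1])
          · -- otherwise the edge is confined inside part u
            push_neg at hab'
            obtain ⟨hna, hnb⟩ := hab'
            have hwp : w ∈ part u := by
              by_contra hwp
              rcases hcross u hu' w hw' hwp with h1 | h1
              · exact hna h1
              · exact hnb h1
            refine conf c hsym hrf s (c u w) u w (part u)
              (fun z hz => hs'sub (hpsub u hu' hz)) ?_ (hpmem u hu') hw hune rfl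
              v hv (fun hh => hvs' (hpsub u hu' hh))
            intro y hyp z hz hzp
            have hy' : y ∈ s' := hpsub u hu' hyp
            by_cases hzv : z = v
            · intro hcy
              rw [hzv] at hcy
              rcases hvge y hy' with h1 | h1
              · exact hug (by rw [← hcy, hsym y v]; exact h1)
              · exact hue (by rw [← hcy, hsym y v]; exact h1)
            · have hz' : z ∈ s' := (hmem' z).mpr ⟨hz, hzv⟩
              have hpyu : part y = part u := hcoh u hu' y hy' hyp
              have hznp : z ∉ part y := by rw [hpyu]; exact hzp
              intro hcy
              rcases hcross y hy' z hz' hznp with h1 | h1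
              · exact hna (by rw [← hcy, h1])
              · exact hnb (by rw [← hcy, h1])

end Stmt5Aux

/-- The edge relation `E` on `V` together with the labeling `ℓ : V ≃ Fin n`
is the simple permutation graph of the permutation `π` of `{1,…,n}`:
`{u,v} ∈ E ⇔ ℓ(u) > ℓ(v) and π⁻¹(ℓ(u)) < π⁻¹(ℓ(v))` (stated symmetrically in `u,v`). -/
def IsPermGraph {V : Type*} {n : ℕ} (E : V → V → Prop) (ℓ : V ≃ Fin n)
    (π : Equiv.Perm (Fin n)) : Prop :=
  ∀ u v : V, E u v ↔
    ((ℓ v < ℓ u ∧ π⁻¹ (ℓ u) < π⁻¹ (ℓ v)) ∨ (ℓ u < ℓ v ∧ π⁻¹ (ℓ v) < π⁻¹ (ℓ u)))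

/-- `c` is the edge-coloring of a complete `k`-edge-colored graph on `V`:
it is symmetric, every pair of distinct vertices receives a color in `{1,…,k}`,
and every color in `{1,…,k}` occurs on some edge. -/
def IsCompleteColoring {V : Type*} (k : ℕ) (c : V → V → ℕ) : Prop :=
  (∀ u v : V, c u v = c v u) ∧
  (∀ u v : V, u ≠ v → c u v ∈ Finset.Icc 1 k) ∧
  (∀ i ∈ Finset.Icc 1 k, ∃ u v : V, u ≠ v ∧ c u v = i)

/-- The edge relation of the `i`-th monochromatic subgraph `G_{|i}`. -/
def monoEdge {V : Type*} (c : V → V → ℕ) (i : ℕ) : V → V → Prop :=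
  fun u v => u ≠ v ∧ c u v = i

/-- The complete edge-colored graph with coloring `c` is a complete edge-colored
permutation graph: there are a labeling `ℓ` and permutations `π i` such that every
monochromatic subgraph `(G_{|i}, ℓ)` is the simple permutation graph of `π i`. -/
def IsCECPG {V : Type*} [Fintype V] (c : V → V → ℕ) : Prop :=
  ∃ (ℓ : V ≃ Fin (Fintype.card V)) (π : ℕ → Equiv.Perm (Fin (Fintype.card V))),
    ∀ i : ℕ, IsPermGraph (monoEdge c i) ℓ (π i)

/-- `c` contains a rainbow triangle: three vertices whose three connecting edges
have pairwise distinct colors. -/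
def HasRainbowTriangle {V : Type*} (c : V → V → ℕ) : Prop :=
  ∃ u v w : V, u ≠ v ∧ u ≠ w ∧ v ≠ w ∧
    c u v ≠ c u w ∧ c u v ≠ c v w ∧ c u w ≠ c v w

/-- `M` is a module of the complete edge-colored graph with coloring `c`. -/
def IsModule {V : Type*} (c : V → V → ℕ) (M : Set V) : Prop :=
  ∀ u ∈ M, ∀ w ∈ M, ∀ v ∉ M, c u v = c w v

/-- The coloring `c` is primitive: its only modules are the trivial ones. -/
def IsPrimitive {V : Type*} (c : V → V → ℕ) : Prop :=
  ∀ M : Set V, IsModule c M → M = ∅ ∨ M = Set.univ ∨ ∃ x : V, M = {x}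

/-- Every primitive complete `k`-edge-colored graph with `k ≥ 3`
contains a rainbow triangle. -/
theorem stmt5 {V : Type*} [Fintype V] [Nonempty V] (k : ℕ) (hk : 3 ≤ k)
    (c : V → V → ℕ) (hc : IsCompleteColoring k c) (hprim : IsPrimitive c) :
    HasRainbowTriangle c := by
  classical
  by_contra hR
  obtain ⟨hsym, _hrange, hall⟩ := hc
  have hrf : Stmt5Aux.RF c := by
    intro u v w huv huw hvw
    by_contra hcon
    push_neg at hcon
    obtain ⟨h1, h2, h3⟩ := hcon
    exact hR ⟨u, v, w, huv, huw, hvw, h1, h2, h3⟩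
  rcases Stmt5Aux.main c hsym hrf (Finset.univ.card) Finset.univ le_rfl with
    ⟨M, hMs, hMcard, hMne, hMmod⟩ | ⟨a, b, hbnd⟩
  · -- contradiction with primitivity
    have hmod : IsModule c (↑M : Set V) := by
      intro u hu w hw y hy
      exact hMmod u hu w hw y (Finset.mem_univ y) (by exact_mod_cast hy)
    rcases hprim (↑M) hmod with h | h | ⟨x, h⟩
    · rw [Finset.coe_eq_empty] at h
      rw [h] at hMcard; simp at hMcard
    · rw [Finset.coe_eq_univ] at h
      exact hMne h
    · rw [Finset.coe_eq_singleton] at h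
      rw [h] at hMcard; simp at hMcard
  · -- colors 1 2 3 all used, all in {a,b}: pigeonhole
    have h1 : ∃ u v : V, u ≠ v ∧ c u v = 1 := hall 1 (by simp; omega)
    have h2 : ∃ u v : V, u ≠ v ∧ c u v = 2 := hall 2 (by simp; omega)
    have h3 : ∃ u v : V, u ≠ v ∧ c u v = 3 := hall 3 (by simp; omega)
    obtain ⟨u1, v1, hne1, hc1⟩ := h1
    obtain ⟨u2, v2, hne2, hc2⟩ := h2
    obtain ⟨u3, v3, hne3, hc3⟩ := h3
    have e1 := hbnd u1 (Finset.mem_univ _) v1 (Finset.mem_univ _) hne1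
    have e2 := hbnd u2 (Finset.mem_univ _) v2 (Finset.mem_univ _) hne2
    have e3 := hbnd u3 (Finset.mem_univ _) v3 (Finset.mem_univ _) hne3
    rw [hc1] at e1; rw [hc2] at e2; rw [hc3] at e3
    rcases e1 with rfl | rfl <;> rcases e2 with h | h <;> rcases e3 with h' | h' <;> omega
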